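/- Let P > 1, K ≥ 1, and suppose the exponents r_i ≤ 0 and d_i ≥ 0 satisfy r_i + α_{ii} − max{0, max_{j≠i}(r_j + α_{ij})} = d_i for each i. Then log₂(1 + P^{r_i+α_{ii}} / (1 + ∑_{j≠i} P^{r_j+α_{ij}})) ≥ d_i log₂ P − log₂ K for every i. -/
import Mathlib


theorem stmt_10 (K : ℕ) (hK : 1 ≤ K) (P : ℝ) (hP : 1 < P)
    (α : Fin K → Fin K → ℝ) (hα : ∀ i j, 0 ≤ α i j)
    (r : Fin K → ℝ) (hr : ∀ i, r i ≤ 0) (d : Fin K → ℝ) (hd : ∀ i, 0 ≤ d i)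
    (hach : ∀ i, r i + α i i -
        max 0 (⨆ j : {j : Fin K // j ≠ i}, (r j.1 + α i j.1)) = d i) :
    ∀ i, d i * Real.logb 2 P - Real.logb 2 K ≤
      Real.logb 2
        (1 + P ^ (r i + α i i) /
          (1 + ∑ j ∈ Finset.univ.erase i, P ^ (r j + α i j))) := by
  intro i
  have hP0 : (0:ℝ) < P := lt_trans one_pos hP
  set M : ℝ := max 0 (⨆ j : {j : Fin K // j ≠ i}, (r j.1 + α i j.1)) with hM
  have hM0 : 0 ≤ M := le_max_left _ _
  have hPM1 : (1:ℝ) ≤ P ^ M := Real.one_le_rpow hP.le hM0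
  have hPMpos : (0:ℝ) < P ^ M := Real.rpow_pos_of_pos hP0 M
  have hK0 : (0:ℝ) < (K:ℝ) := by exact_mod_cast hK
  -- each term bounded by P^M
  have hterm : ∀ j ∈ Finset.univ.erase i, P ^ (r j + α i j) ≤ P ^ M := by
    intro j hj
    have hjne : j ≠ i := (Finset.mem_erase.mp hj).1
    have hle : r j + α i j ≤ M := by
      have : r j + α i j ≤ ⨆ j : {j : Fin K // j ≠ i}, (r j.1 + α i j.1) :=
        le_ciSup (f := fun j : {j : Fin K // j ≠ i} => r j.1 + α i j.1)
          (Set.Finite.bddAbove (Set.finite_range _)) ⟨j, hjne⟩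
      exact this.trans (le_max_right _ _)
    exact Real.rpow_le_rpow_of_exponent_le hP.le hle
  have hsumle : ∑ j ∈ Finset.univ.erase i, P ^ (r j + α i j)
      ≤ (K - 1) * P ^ M := by
    calc ∑ j ∈ Finset.univ.erase i, P ^ (r j + α i j)
        ≤ ∑ _j ∈ Finset.univ.erase i, P ^ M := Finset.sum_le_sum hterm
      _ = ((Finset.univ.erase i).card : ℝ) * P ^ M := by
          rw [Finset.sum_const, nsmul_eq_mul]
      _ = (K - 1) * P ^ M := by
          rw [Finset.card_erase_of_mem (Finset.mem_univ i), Finset.card_univ, Fintype.card_fin]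
          rw [Nat.cast_sub hK]
          norm_num
  have hden : 1 + ∑ j ∈ Finset.univ.erase i, P ^ (r j + α i j) ≤ (K:ℝ) * P ^ M := by
    have : (K:ℝ) * P ^ M = (K - 1) * P ^ M + P ^ M := by ring
    rw [this]
    have := add_le_add hPM1 hsumle
    linarith
  have hdenpos : (0:ℝ) < 1 + ∑ j ∈ Finset.univ.erase i, P ^ (r j + α i j) := by
    have : (0:ℝ) ≤ ∑ j ∈ Finset.univ.erase i, P ^ (r j + α i j) :=
      Finset.sum_nonneg fun j _ => (Real.rpow_pos_of_pos hP0 _).le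
    linarith
  set a : ℝ := r i + α i i
  have hPa : (0:ℝ) < P ^ a := Real.rpow_pos_of_pos hP0 a
  have hfrac : P ^ a / ((K:ℝ) * P ^ M) ≤ P ^ a / (1 + ∑ j ∈ Finset.univ.erase i, P ^ (r j + α i j)) := by
    gcongr
  have hlogeq : d i * Real.logb 2 P - Real.logb 2 K
      = Real.logb 2 (P ^ a / ((K:ℝ) * P ^ M)) := by
    have ha : a - M = d i := hach i
    rw [Real.logb_div hPa.ne' (by positivity), Real.logb_mul (ne_of_gt hK0) hPMpos.ne',
      Real.logb_rpow_eq_mul_logb_of_pos hP0, Real.logb_rpow_eq_mul_logb_of_pos hP0, ← ha]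
    ring
  rw [hlogeq]
  refine Real.logb_le_logb_of_le one_lt_two (by positivity) (hfrac.trans ?_)
  have h2 : P ^ a / (1 + ∑ j ∈ Finset.univ.erase i, P ^ (r j + α i j))
      ≤ 1 + P ^ a / (1 + ∑ j ∈ Finset.univ.erase i, P ^ (r j + α i j)) := by linarith [(by positivity : (0:ℝ) ≤ P ^ a / (1 + ∑ j ∈ Finset.univ.erase i, P ^ (r j + α i j)))]
  exact h2
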